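/- Let A, B be self-adjoint operators with [A, B] = iħ on a common invariant domain, ψ a vector in the domain with ‖ψ‖ = 1. Then ⟨ψ, A²ψ⟩^{1/2} · ⟨ψ, B²ψ⟩^{1/2} ≥ ħ/2, and if equality holds then ⟨ψ, Aψ⟩ = ⟨ψ, Bψ⟩ = 0. -/

import Mathlib

open scoped InnerProductSpace

theorem second_moment_uncertainty_and_unbiasedness
    {E : Type*} [NormedAddCommGroup E] [InnerProductSpace ℂ E]
    (A B : E →ₗ[ℂ] E) (hA : A.IsSymmetric) (hB : B.IsSymmetric)
    (hbar : ℝ) (hhbar : 0 < hbar)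
    (hCCR : ∀ x : E, A (B x) - B (A x) = (Complex.I * hbar) • x)
    (ψ : E) (hψ : ‖ψ‖ = 1) :
    Real.sqrt (⟪ψ, A (A ψ)⟫_ℂ).re * Real.sqrt (⟪ψ, B (B ψ)⟫_ℂ).re ≥ hbar / 2 ∧
    (Real.sqrt (⟪ψ, A (A ψ)⟫_ℂ).re * Real.sqrt (⟪ψ, B (B ψ)⟫_ℂ).re = hbar / 2 →
      ⟪ψ, A ψ⟫_ℂ = 0 ∧ ⟪ψ, B ψ⟫_ℂ = 0) := by
  set u := A ψ with hu
  set v := B ψ with hv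
  -- second moments are squared norms
  have hAsq : (⟪ψ, A (A ψ)⟫_ℂ).re = ‖u‖ ^ 2 := by
    rw [← hA ψ (A ψ), ← hu, inner_self_eq_norm_sq_to_K]
    norm_cast
  have hBsq : (⟪ψ, B (B ψ)⟫_ℂ).re = ‖v‖ ^ 2 := by
    rw [← hB ψ (B ψ), ← hv, inner_self_eq_norm_sq_to_K]
    norm_cast
  have hsA : Real.sqrt (⟪ψ, A (A ψ)⟫_ℂ).re = ‖u‖ := by
    rw [hAsq, Real.sqrt_sq (norm_nonneg u)]
  have hsB : Real.sqrt (⟪ψ, B (B ψ)⟫_ℂ).re = ‖v‖ := by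
    rw [hBsq, Real.sqrt_sq (norm_nonneg v)]
  rw [hsA, hsB]
  -- the commutator identity at ψ
  set z : ℂ := ⟪u, v⟫_ℂ with hzdef
  have hψψ : ⟪ψ, ψ⟫_ℂ = 1 := by
    rw [inner_self_eq_norm_sq_to_K, hψ]; norm_num
  have hkey : z - (starRingEnd ℂ) z = Complex.I * hbar := by
    have h1 : ⟪ψ, A (B ψ) - B (A ψ)⟫_ℂ = ⟪ψ, (Complex.I * (hbar:ℂ)) • ψ⟫_ℂ := by
      rw [hCCR ψ]
    rw [inner_sub_right, inner_smul_right, hψψ, mul_one] at h1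
    rw [← hA ψ (B ψ), ← hB ψ (A ψ)] at h1
    rw [← hu, ← hv] at h1
    rw [← inner_conj_symm v u] at h1
    exact h1
  have him : z.im = hbar / 2 := by
    have := congrArg Complex.im hkey
    simp [Complex.sub_im, Complex.conj_im, Complex.mul_im] at this
    linarith
  have hineq : hbar / 2 ≤ ‖u‖ * ‖v‖ := by
    calc hbar / 2 = z.im := him.symm
      _ ≤ ‖z‖ := Complex.im_le_norm z
      _ = ‖z‖ := rfl
      _ ≤ ‖u‖ * ‖v‖ := norm_inner_le_norm u v
  refine ⟨hineq, ?_⟩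
  intro heq
  -- equality case
  have habs : ‖z‖ = ‖u‖ * ‖v‖ := by
    have h1 : hbar / 2 ≤ ‖z‖ := by
      calc hbar / 2 = z.im := him.symm
        _ ≤ ‖z‖ := Complex.im_le_norm z
        _ = ‖z‖ := rfl
    have h2 : ‖z‖ ≤ ‖u‖ * ‖v‖ := norm_inner_le_norm u v
    linarith [heq ▸ h2]
  have hu0 : u ≠ 0 := by
    intro h; rw [h] at heq; simp at heq; linarith
  have hv0 : v ≠ 0 := by
    intro h; rw [h] at heq; simp at heq; linarith
  obtain ⟨r, hr0, hrv⟩ := (norm_inner_eq_norm_iff hu0 hv0).mp habs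
  -- z = r * ‖u‖²
  have hz : z = r * (‖u‖ : ℂ) ^ 2 := by
    rw [hzdef, hrv, inner_smul_right, inner_self_eq_norm_sq_to_K]
    norm_cast
  have hnu : (0:ℝ) < ‖u‖ ^ 2 := pow_pos (norm_pos_iff.mpr hu0) 2
  -- z.im = ‖z‖, hence r.im = |r|, hence r.re = 0
  have hzim : z.im = ‖z‖ := by
    rw [him, habs, ← heq]
  have hrim : r.im * ‖u‖ ^ 2 = ‖r‖ * ‖u‖ ^ 2 := by
    have h1 : z.im = r.im * ‖u‖ ^ 2 := by
      rw [hz]; simp [Complex.mul_im, ← Complex.ofReal_pow]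
    have h2 : ‖z‖ = ‖r‖ * ‖u‖ ^ 2 := by
      rw [hz, norm_mul, norm_pow, Complex.norm_real, norm_norm]
    rw [← h1, ← h2, hzim]
  have hrim' : r.im = ‖r‖ := mul_right_cancel₀ (ne_of_gt hnu) hrim
  have hrre : r.re = 0 := by
    have h := Complex.sq_norm r
    rw [Complex.normSq_apply, ← hrim'] at h
    nlinarith
  have hrim0 : r.im ≠ 0 := by
    intro h
    apply hr0
    exact Complex.ext hrre h
  -- ⟨ψ, Aψ⟩ and ⟨ψ, Bψ⟩ are real
  have hare : (⟪ψ, u⟫_ℂ).im = 0 := by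
    have h := hA ψ ψ
    rw [← inner_conj_symm u ψ] at h
    exact Complex.conj_eq_iff_im.mp h
  have hbre : (⟪ψ, v⟫_ℂ).im = 0 := by
    have h := hB ψ ψ
    rw [← inner_conj_symm v ψ] at h
    exact Complex.conj_eq_iff_im.mp h
  have hb_eq : ⟪ψ, v⟫_ℂ = r * ⟪ψ, u⟫_ℂ := by
    rw [hrv, inner_smul_right]
  have hare2 : (⟪ψ, u⟫_ℂ).re = 0 := by
    have h1 : (⟪ψ, v⟫_ℂ).im = r.im * (⟪ψ, u⟫_ℂ).re := by
      rw [hb_eq, Complex.mul_im, hare]; ring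
    rw [hbre] at h1
    have := h1.symm
    rcases mul_eq_zero.mp this with h | h
    · exact absurd h hrim0
    · exact h
  have ha0 : ⟪ψ, A ψ⟫_ℂ = 0 := by
    rw [← hu]; exact Complex.ext hare2 hare
  have ha0' : ⟪ψ, u⟫_ℂ = 0 := by rw [hu]; exact ha0
  refine ⟨ha0, ?_⟩
  rw [hb_eq, ha0', mul_zero]
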